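/- arXiv:2311.07039 — 4 statements merged into one kernel-verified Lean document; each statement's English description precedes it below -/
import Mathlib

section
/- Let n ≥ 1, M_0 > 0 and M_1, …, M_n > 0 (possibly +∞). Let x_1, …, x_n : [0, T] → ℝ be continuous and u : [0, T] → ℝ satisfy the chain-of-integrators dynamics on (0, T), with |u(t)| ≤ M_0 and |x_k(t)| ≤ M_k for all t and all k. Suppose x_n is constant on [t_1, t_2] ⊆ [0, T] with t_1 < t_2, and set Δ = t_2 − t_1. Then there exist continuous y_1, …, y_n : [0, T − Δ] → ℝ and v : [0, T − Δ] → ℝ satisfying the chain-of-integrators dynamics at all but at most one time in (0, T − Δ), with |v(t)| ≤ M_0 and |y_k(t)| ≤ M_k for all t and k, such that y_k(0) = x_k(0) and y_k(T − Δ) = x_k(T) for all k. Consequently, a trajectory whose top state x_n is constant on a nondegenerate interval is not time-optimal: the same endpoints can be joined in strictly shorter time under the same constraints. -/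
/-- Helper: if `f` is continuous on `[0,T]`, `[a,b] ⊆ [0,T]`, `a < b`, and `f = 0`
on `(a,b)`, then `f a = 0` and `f b = 0`. -/
lemma endpoint_zero_aux {f : ℝ → ℝ} {a b T : ℝ} (hab : a < b)
    (hsub : Set.Icc a b ⊆ Set.Icc 0 T) (hf : ContinuousOn f (Set.Icc 0 T))
    (h0 : ∀ t ∈ Set.Ioo a b, f t = 0) : f a = 0 ∧ f b = 0 := by
  have hfab : ContinuousOn f (Set.Icc a b) := hf.mono hsub
  have hcl : closure (Set.Ioo a b) = Set.Icc a b := closure_Ioo hab.ne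
  constructor
  · have hmem : a ∈ closure (Set.Ioo a b) := by
      rw [hcl]; exact Set.left_mem_Icc.2 hab.le
    have hne : (nhdsWithin a (Set.Ioo a b)).NeBot :=
      mem_closure_iff_nhdsWithin_neBot.1 hmem
    have h1 : Filter.Tendsto f (nhdsWithin a (Set.Ioo a b)) (nhds (f a)) :=
      ((hfab a (Set.left_mem_Icc.2 hab.le)).mono Set.Ioo_subset_Icc_self)
    have h2 : Filter.Tendsto f (nhdsWithin a (Set.Ioo a b)) (nhds 0) := by
      refine Filter.Tendsto.congr' ?_ tendsto_const_nhds
      filter_upwards [self_mem_nhdsWithin] with t ht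
      exact (h0 t ht).symm
    exact tendsto_nhds_unique h1 h2
  · have hmem : b ∈ closure (Set.Ioo a b) := by
      rw [hcl]; exact Set.right_mem_Icc.2 hab.le
    have hne : (nhdsWithin b (Set.Ioo a b)).NeBot :=
      mem_closure_iff_nhdsWithin_neBot.1 hmem
    have h1 : Filter.Tendsto f (nhdsWithin b (Set.Ioo a b)) (nhds (f b)) :=
      ((hfab b (Set.right_mem_Icc.2 hab.le)).mono Set.Ioo_subset_Icc_self)
    have h2 : Filter.Tendsto f (nhdsWithin b (Set.Ioo a b)) (nhds 0) := by
      refine Filter.Tendsto.congr' ?_ tendsto_const_nhds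
      filter_upwards [self_mem_nhdsWithin] with t ht
      exact (h0 t ht).symm
    exact tendsto_nhds_unique h1 h2

/-- a trajectory whose top state `x n` is constant on a nondegenerate
interval is not time-optimal: the same endpoints can be joined in strictly shorter
time (time `T - (t₂ - t₁)`) under the same input and state constraints, by a
trajectory satisfying the dynamics at all but at most one time. -/
theorem constant_top_state_not_time_optimal
    (n : ℕ) (hn : 1 ≤ n) (M0 : ℝ) (hM0 : 0 < M0)
    (M : ℕ → EReal) (hM : ∀ k, 1 ≤ k → k ≤ n → (0 : EReal) < M k)
    (T : ℝ) (x : ℕ → ℝ → ℝ) (u : ℝ → ℝ)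
    (hxc : ∀ k, 1 ≤ k → k ≤ n → ContinuousOn (x k) (Set.Icc 0 T))
    (hx1 : ∀ t ∈ Set.Ioo 0 T, HasDerivAt (x 1) (u t) t)
    (hxk : ∀ k, 1 ≤ k → k < n → ∀ t ∈ Set.Ioo 0 T, HasDerivAt (x (k + 1)) (x k t) t)
    (hu : ∀ t ∈ Set.Icc 0 T, |u t| ≤ M0)
    (hxb : ∀ k, 1 ≤ k → k ≤ n → ∀ t ∈ Set.Icc 0 T, ((|x k t| : ℝ) : EReal) ≤ M k)
    (t1 t2 : ℝ) (h12 : t1 < t2) (hsub : Set.Icc t1 t2 ⊆ Set.Icc 0 T)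
    (c : ℝ) (hconst : ∀ t ∈ Set.Icc t1 t2, x n t = c) :
    ∃ (y : ℕ → ℝ → ℝ) (v : ℝ → ℝ) (t0 : ℝ),
      (∀ k, 1 ≤ k → k ≤ n → ContinuousOn (y k) (Set.Icc 0 (T - (t2 - t1)))) ∧
      (∀ t ∈ Set.Ioo 0 (T - (t2 - t1)), t ≠ t0 → HasDerivAt (y 1) (v t) t) ∧
      (∀ k, 1 ≤ k → k < n → ∀ t ∈ Set.Ioo 0 (T - (t2 - t1)), t ≠ t0 →
        HasDerivAt (y (k + 1)) (y k t) t) ∧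
      (∀ t ∈ Set.Icc 0 (T - (t2 - t1)), |v t| ≤ M0) ∧
      (∀ k, 1 ≤ k → k ≤ n → ∀ t ∈ Set.Icc 0 (T - (t2 - t1)), ((|y k t| : ℝ) : EReal) ≤ M k) ∧
      (∀ k, 1 ≤ k → k ≤ n → y k 0 = x k 0 ∧ y k (T - (t2 - t1)) = x k T) := by
  set Δ : ℝ := t2 - t1 with hΔ
  have hΔpos : 0 < Δ := sub_pos.2 h12
  have ht1mem : t1 ∈ Set.Icc 0 T := hsub ⟨le_refl _, h12.le⟩
  have ht2mem : t2 ∈ Set.Icc 0 T := hsub ⟨h12.le, le_refl _⟩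
  have ht10 : 0 ≤ t1 := ht1mem.1
  have ht2T : t2 ≤ T := ht2mem.2
  have ht1T : t1 ≤ T - Δ := by simp only [hΔ]; linarith
  have hIooSub : Set.Ioo t1 t2 ⊆ Set.Ioo 0 T := fun t ht =>
    ⟨lt_of_le_of_lt ht10 ht.1, lt_of_lt_of_le ht.2 ht2T⟩
  -- x (n - j) is constant on Ioo t1 t2 for each j < n
  have H : ∀ j : ℕ, j < n → ∀ t ∈ Set.Ioo t1 t2, x (n - j) t = if j = 0 then c else 0 := by
    intro j
    induction j with
    | zero =>
      intro _ t ht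
      simp only [Nat.sub_zero, if_pos rfl]
      exact hconst t (Set.Ioo_subset_Icc_self ht)
    | succ j ih =>
      intro hjn t ht
      have hjn' : j < n := Nat.lt_of_succ_lt hjn
      have hconst' : ∀ s ∈ Set.Ioo t1 t2, x (n - j) s = if j = 0 then c else 0 := ih hjn'
      -- x (n - j) has derivative 0 at t
      have hd0 : HasDerivAt (x (n - j)) 0 t := by
        have : x (n - j) =ᶠ[nhds t] fun _ => (if j = 0 then c else 0) := by
          filter_upwards [isOpen_Ioo.mem_nhds ht] with s hs
          exact hconst' s hs
        exact (hasDerivAt_const t (if j = 0 then c else 0)).congr_of_eventuallyEq this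
      -- x (n - j) has derivative x (n - (j+1)) t at t
      have hk1 : 1 ≤ n - (j + 1) := by omega
      have hkn : n - (j + 1) < n := by omega
      have hkk : n - (j + 1) + 1 = n - j := by omega
      have hd : HasDerivAt (x (n - j)) (x (n - (j + 1)) t) t := by
        have := hxk (n - (j + 1)) hk1 hkn t (hIooSub ht)
        rwa [hkk] at this
      have := hd.unique hd0
      simpa using this
  have hzero : ∀ k, 1 ≤ k → k < n → ∀ t ∈ Set.Ioo t1 t2, x k t = 0 := by
    intro k hk1 hkn t ht
    have hj : n - (n - k) = k := by omega
    have := H (n - k) (by omega) t ht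
    rw [hj] at this
    rw [this, if_neg (by omega)]
  -- endpoint matching
  have hmatch : ∀ k, 1 ≤ k → k ≤ n → x k t1 = x k t2 := by
    intro k hk1 hkn
    rcases eq_or_lt_of_le hkn with heq | hlt
    · subst heq
      rw [hconst t1 ⟨le_refl _, h12.le⟩, hconst t2 ⟨h12.le, le_refl _⟩]
    · obtain ⟨h1, h2⟩ := endpoint_zero_aux h12 hsub (hxc k hk1 hlt.le) (hzero k hk1 hlt)
      rw [h1, h2]
  have ht1t2 : t1 + Δ = t2 := by simp [hΔ]
  -- the shifted trajectory
  refine ⟨fun k t => if t ≤ t1 then x k t else x k (t + Δ),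
          fun t => if t ≤ t1 then u t else u (t + Δ), t1, ?_, ?_, ?_, ?_, ?_, ?_⟩
  · -- continuity
    intro k hk1 hkn
    apply ContinuousOn.if
    · intro a ha
      have hfr : frontier {a : ℝ | a ≤ t1} ⊆ {t1} := by
        rw [show {a : ℝ | a ≤ t1} = Set.Iic t1 from rfl, frontier_Iic]
    -- frontier_Iic : frontier (Iic a) = {a}
      have : a = t1 := hfr ha.2
      subst this
      rw [ht1t2]
      exact hmatch k hk1 hkn
    · refine (hxc k hk1 hkn).mono ?_
      intro t ht
      have ht' : t ∈ Set.Icc 0 (T - Δ) := ht.1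
      have h2 : t ≤ t1 := by
        have : t ∈ closure {a : ℝ | a ≤ t1} := ht.2
        rwa [show {a : ℝ | a ≤ t1} = Set.Iic t1 from rfl, closure_Iic] at this
      exact ⟨ht'.1, le_trans h2 (le_trans h12.le ht2T)⟩
    · refine ((hxc k hk1 hkn).comp (Continuous.continuousOn (by continuity)) ?_)
      intro t ht
      have ht' : t ∈ Set.Icc 0 (T - Δ) := ht.1
      show t + Δ ∈ Set.Icc 0 T
      constructor
      · linarith [ht'.1, hΔpos.le]
      · linarith [ht'.2]
  · -- dynamics for y 1
    intro t ht hne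
    rcases lt_or_gt_of_ne hne with hlt | hgt
    · have hmem : t ∈ Set.Ioo 0 T := ⟨ht.1, lt_of_lt_of_le (lt_of_lt_of_le hlt ht1T) (by linarith)⟩
      have heq : (fun s => if s ≤ t1 then x 1 s else x 1 (s + Δ)) =ᶠ[nhds t] x 1 := by
        filter_upwards [isOpen_Iio.mem_nhds hlt] with s hs
        simp only [if_pos (Set.mem_Iio.1 hs).le]
      show HasDerivAt (fun s => if s ≤ t1 then x 1 s else x 1 (s + Δ))
        (if t ≤ t1 then u t else u (t + Δ)) t
      rw [if_pos hlt.le]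
      exact (hx1 t hmem).congr_of_eventuallyEq heq
    · have hmem : t + Δ ∈ Set.Ioo 0 T := ⟨by linarith [ht.1], by linarith [ht.2]⟩
      have hbase : HasDerivAt (fun s => x 1 (s + Δ)) (u (t + Δ)) t :=
        HasDerivAt.comp_add_const t Δ (hx1 (t + Δ) hmem)
      have heq : (fun s => if s ≤ t1 then x 1 s else x 1 (s + Δ)) =ᶠ[nhds t]
          fun s => x 1 (s + Δ) := by
        filter_upwards [isOpen_Ioi.mem_nhds hgt] with s hs
        simp only [if_neg (not_le.2 (Set.mem_Ioi.1 hs))]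
      show HasDerivAt (fun s => if s ≤ t1 then x 1 s else x 1 (s + Δ))
        (if t ≤ t1 then u t else u (t + Δ)) t
      rw [if_neg (not_le.2 hgt)]
      exact hbase.congr_of_eventuallyEq heq
  · -- dynamics for y (k+1)
    intro k hk1 hkn t ht hne
    rcases lt_or_gt_of_ne hne with hlt | hgt
    · have hmem : t ∈ Set.Ioo 0 T := ⟨ht.1, lt_of_lt_of_le (lt_of_lt_of_le hlt ht1T) (by linarith)⟩
      have heq : (fun s => if s ≤ t1 then x (k+1) s else x (k+1) (s + Δ)) =ᶠ[nhds t]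
          x (k+1) := by
        filter_upwards [isOpen_Iio.mem_nhds hlt] with s hs
        simp only [if_pos (Set.mem_Iio.1 hs).le]
      show HasDerivAt (fun s => if s ≤ t1 then x (k+1) s else x (k+1) (s + Δ))
        (if t ≤ t1 then x k t else x k (t + Δ)) t
      rw [if_pos hlt.le]
      exact (hxk k hk1 hkn t hmem).congr_of_eventuallyEq heq
    · have hmem : t + Δ ∈ Set.Ioo 0 T := ⟨by linarith [ht.1], by linarith [ht.2]⟩
      have hbase : HasDerivAt (fun s => x (k+1) (s + Δ)) (x k (t + Δ)) t :=
        HasDerivAt.comp_add_const t Δ (hxk k hk1 hkn (t + Δ) hmem)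
      have heq : (fun s => if s ≤ t1 then x (k+1) s else x (k+1) (s + Δ)) =ᶠ[nhds t]
          fun s => x (k+1) (s + Δ) := by
        filter_upwards [isOpen_Ioi.mem_nhds hgt] with s hs
        simp only [if_neg (not_le.2 (Set.mem_Ioi.1 hs))]
      show HasDerivAt (fun s => if s ≤ t1 then x (k+1) s else x (k+1) (s + Δ))
        (if t ≤ t1 then x k t else x k (t + Δ)) t
      rw [if_neg (not_le.2 hgt)]
      exact hbase.congr_of_eventuallyEq heq
  · -- input bound
    intro t ht
    show |if t ≤ t1 then u t else u (t + Δ)| ≤ M0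
    by_cases h : t ≤ t1
    · rw [if_pos h]
      exact hu t ⟨ht.1, le_trans h (le_trans h12.le ht2T)⟩
    · rw [if_neg h]
      exact hu (t + Δ) ⟨by linarith [ht.1, hΔpos.le], by linarith [ht.2]⟩
  · -- state bounds
    intro k hk1 hkn t ht
    show ((|if t ≤ t1 then x k t else x k (t + Δ)| : ℝ) : EReal) ≤ M k
    by_cases h : t ≤ t1
    · rw [if_pos h]
      exact hxb k hk1 hkn t ⟨ht.1, le_trans h (le_trans h12.le ht2T)⟩
    · rw [if_neg h]
      exact hxb k hk1 hkn (t + Δ) ⟨by linarith [ht.1, hΔpos.le], by linarith [ht.2]⟩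
  · -- endpoints
    intro k hk1 hkn
    constructor
    · show (if (0:ℝ) ≤ t1 then x k 0 else x k (0 + Δ)) = x k 0
      rw [if_pos ht10]
    · show (if T - Δ ≤ t1 then x k (T - Δ) else x k (T - Δ + Δ)) = x k T
      by_cases h : T - Δ ≤ t1
      · have ht1eq : t1 = T - Δ := le_antisymm ht1T h
        have ht2eq : t2 = T := by simp only [hΔ] at ht1eq ⊢; linarith
        rw [if_pos h, ← ht1eq, hmatch k hk1 hkn, ht2eq]
      · rw [if_neg h]
        congr 1
        ring
end

section
/- Let k ≥ 2, let a_1, …, a_{k−1}, u⁺, u⁻ ∈ ℝ, and let δ > 0. Define f⁺(t) = Σ_{i=1}^{k−1} a_i t^i / i! + u⁺ t^k / k! and f⁻(t) = Σ_{i=1}^{k−1} a_i (−1)^i t^i / i! + u⁻ (−1)^k t^k / k!. Suppose f⁺(t) < 0 and f⁻(t) < 0 for all t ∈ (0, δ). Then: (i) if the set {i : 1 ≤ i ≤ k − 1, a_i ≠ 0} is nonempty and m is its least element, then m is even and a_m < 0; (ii) if a_i = 0 for all 1 ≤ i ≤ k − 1, then u⁺ < 0 and (−1)^k u⁻ < 0.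 -/
lemma neg_limit_aux {P : ℝ → ℝ} (hP : Continuous P) {δ : ℝ} (hδ : 0 < δ)
    (h : ∀ t ∈ Set.Ioo (0:ℝ) δ, P t ≤ 0) : P 0 ≤ 0 := by
  have h0 : (0:ℝ) ∈ closure (Set.Ioo 0 δ) := by
    rw [closure_Ioo hδ.ne]; exact ⟨le_rfl, hδ.le⟩
  haveI hne : (nhdsWithin (0:ℝ) (Set.Ioo 0 δ)).NeBot :=
    mem_closure_iff_nhdsWithin_neBot.mp h0
  exact le_of_tendsto ((hP.tendsto 0).mono_left nhdsWithin_le_nhds)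
    (eventually_nhdsWithin_of_forall h)

lemma core1 (k m : ℕ) (b : ℕ → ℝ) (c δ : ℝ) (hδ : 0 < δ)
    (hm1 : 1 ≤ m) (hmk : m ≤ k - 1) (hk : 2 ≤ k)
    (hzero : ∀ i, 1 ≤ i → i < m → b i = 0)
    (hneg : ∀ t ∈ Set.Ioo (0:ℝ) δ,
      (∑ i ∈ Finset.Icc 1 (k - 1), b i * t ^ i / (Nat.factorial i : ℝ)) +
        c * t ^ k / (Nat.factorial k : ℝ) < 0) :
    b m ≤ 0 := by
  have hmk' : m < k := lt_of_le_of_lt hmk (Nat.sub_lt (by omega) one_pos)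
  set P : ℝ → ℝ := fun t =>
    (∑ i ∈ Finset.Icc 1 (k - 1), b i * t ^ (i - m) / (Nat.factorial i : ℝ)) +
      c * t ^ (k - m) / (Nat.factorial k : ℝ) with hPdef
  have hfact : ∀ t : ℝ, t ^ m * P t =
      (∑ i ∈ Finset.Icc 1 (k - 1), b i * t ^ i / (Nat.factorial i : ℝ)) +
        c * t ^ k / (Nat.factorial k : ℝ) := by
    intro t
    rw [hPdef]
    simp only [mul_add, Finset.mul_sum]
    congr 1
    · apply Finset.sum_congr rfl
      intro i hi
      rcases lt_or_ge i m with h | h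
      · have hi1 : 1 ≤ i := (Finset.mem_Icc.mp hi).1
        rw [hzero i hi1 h]; ring
      · have : t ^ m * t ^ (i - m) = t ^ i := by
          rw [← pow_add, Nat.add_sub_cancel' h]
        calc t ^ m * (b i * t ^ (i - m) / (Nat.factorial i : ℝ))
            = b i * (t ^ m * t ^ (i - m)) / (Nat.factorial i : ℝ) := by ring
          _ = b i * t ^ i / (Nat.factorial i : ℝ) := by rw [this]
    · have : t ^ m * t ^ (k - m) = t ^ k := by
        rw [← pow_add, Nat.add_sub_cancel' hmk'.le]
      calc t ^ m * (c * t ^ (k - m) / (Nat.factorial k : ℝ))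
          = c * (t ^ m * t ^ (k - m)) / (Nat.factorial k : ℝ) := by ring
        _ = c * t ^ k / (Nat.factorial k : ℝ) := by rw [this]
  have hPneg : ∀ t ∈ Set.Ioo (0:ℝ) δ, P t ≤ 0 := by
    intro t ht
    by_contra h
    push_neg at h
    have htm : 0 < t ^ m := pow_pos ht.1 m
    have := hneg t ht
    rw [← hfact t] at this
    exact absurd this (not_lt.mpr (mul_pos htm h).le)
  have hcont : Continuous P := by
    apply Continuous.add
    · exact continuous_finset_sum _ fun i _ => by fun_prop
    · fun_prop
  have hP0 : P 0 ≤ 0 := neg_limit_aux hcont hδ hPneg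
  have hval : P 0 = b m / (Nat.factorial m : ℝ) := by
    rw [hPdef]
    simp only
    have hsum : (∑ i ∈ Finset.Icc 1 (k - 1), b i * (0:ℝ) ^ (i - m) / (Nat.factorial i : ℝ))
        = b m / (Nat.factorial m : ℝ) := by
      rw [Finset.sum_eq_single m]
      · simp
      · intro i hi hne
        rcases lt_or_ge i m with h | h
        · rw [hzero i (Finset.mem_Icc.mp hi).1 h]; ring
        · have : i - m ≠ 0 := Nat.sub_ne_zero_of_lt (lt_of_le_of_ne h (Ne.symm hne))
          rw [zero_pow this]; ring
      · intro h
        exact absurd (Finset.mem_Icc.mpr ⟨hm1, hmk⟩) h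
    rw [hsum, zero_pow (Nat.sub_ne_zero_of_lt hmk')]
    ring
  rw [hval] at hP0
  have hfp : (0:ℝ) < (Nat.factorial m : ℝ) := by
    exact_mod_cast Nat.factorial_pos m
  have h2 : b m / (Nat.factorial m : ℝ) * (Nat.factorial m : ℝ) = b m :=
    div_mul_cancel₀ _ hfp.ne'
  nlinarith

/-- analytic core of the isolated-touch junction analysis. If both
one-sided Taylor-type expansions `f⁺` and `f⁻` are strictly negative on `(0, δ)`,
then the least index `m` with `a m ≠ 0` (if any) is even with `a m < 0`; and if all
`a i` vanish then `u⁺ < 0` and `(-1)^k u⁻ < 0`. -/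
theorem isolated_touch_taylor_sign_analysis
    (k : ℕ) (hk : 2 ≤ k) (a : ℕ → ℝ) (up um δ : ℝ) (hδ : 0 < δ)
    (hplus : ∀ t ∈ Set.Ioo (0:ℝ) δ,
      (∑ i ∈ Finset.Icc 1 (k - 1), a i * t ^ i / (Nat.factorial i : ℝ)) +
        up * t ^ k / (Nat.factorial k : ℝ) < 0)
    (hminus : ∀ t ∈ Set.Ioo (0:ℝ) δ,
      (∑ i ∈ Finset.Icc 1 (k - 1), a i * (-1 : ℝ) ^ i * t ^ i / (Nat.factorial i : ℝ)) +
        um * (-1 : ℝ) ^ k * t ^ k / (Nat.factorial k : ℝ) < 0) :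
    (∀ m, 1 ≤ m → m ≤ k - 1 → a m ≠ 0 → (∀ i, 1 ≤ i → i < m → a i = 0) →
      Even m ∧ a m < 0) ∧
    ((∀ i, 1 ≤ i → i ≤ k - 1 → a i = 0) → up < 0 ∧ (-1 : ℝ) ^ k * um < 0) := by
  constructor
  · intro m hm1 hmk hane hzero
    have h1 : a m ≤ 0 := core1 k m a up δ hδ hm1 hmk hk hzero hplus
    have h2 : a m * (-1:ℝ) ^ m ≤ 0 := by
      apply core1 k m (fun i => a i * (-1:ℝ)^i) (um * (-1:ℝ)^k) δ hδ hm1 hmk hk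
      · intro i hi1 him
        rw [hzero i hi1 him]; ring
      · intro t ht
        simpa using hminus t ht
    have ha : a m < 0 := lt_of_le_of_ne h1 hane
    constructor
    · rcases Nat.even_or_odd m with h | h
      · exact h
      · exfalso
        rw [h.neg_one_pow] at h2
        nlinarith
    · exact ha
  · intro hall
    have ht : δ / 2 ∈ Set.Ioo (0:ℝ) δ := ⟨by linarith, by linarith⟩
    have hsum0 : ∀ (g : ℕ → ℝ), (∀ i ∈ Finset.Icc 1 (k-1), g i = 0) →
        ∑ i ∈ Finset.Icc 1 (k-1), g i = 0 := fun g h => Finset.sum_eq_zero h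
    have hpow : (0:ℝ) < (δ/2) ^ k / (Nat.factorial k : ℝ) := by positivity
    constructor
    · have := hplus (δ/2) ht
      rw [Finset.sum_eq_zero (fun i hi => by
        rw [hall i (Finset.mem_Icc.mp hi).1 (Finset.mem_Icc.mp hi).2]; ring), zero_add,
        mul_div_assoc] at this
      by_contra h
      push_neg at h
      exact absurd this (not_lt.mpr (mul_nonneg h hpow.le))
    · have := hminus (δ/2) ht
      rw [Finset.sum_eq_zero (fun i hi => by
        rw [hall i (Finset.mem_Icc.mp hi).1 (Finset.mem_Icc.mp hi).2]; ring), zero_add] at this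
      have h' : ((-1:ℝ) ^ k * um) * ((δ/2) ^ k / (Nat.factorial k : ℝ)) < 0 := by
        calc ((-1:ℝ) ^ k * um) * ((δ/2) ^ k / (Nat.factorial k : ℝ))
            = um * (-1) ^ k * (δ/2) ^ k / (Nat.factorial k : ℝ) := by ring
          _ < 0 := this
      by_contra h
      push_neg at h
      exact absurd h' (not_lt.mpr (mul_nonneg h hpow.le))
end

section
/- Let n ≥ 1, 1 ≤ k ≤ n, M > 0, σ ∈ {−1, 1}, δ > 0, and let u ∈ ℝ be a constant. Let x_1, …, x_n : [T, T + δ] → ℝ satisfy the chain-of-integrators dynamics with constant control u on [T, T + δ]. Suppose x_i(T) = 0 for all 1 ≤ i < k, x_k(T) = σM, and |x_k(t)| ≤ M for all t ∈ [T, T + δ]. Then σu ≤ 0. -/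
/-- Two functions with the same derivative on `[a,b]` agreeing at `a` agree on `[a,b]`. -/
lemma eqOn_Icc_of_hasDerivAt {a b : ℝ} {f g d : ℝ → ℝ}
    (hf : ∀ t ∈ Set.Icc a b, HasDerivAt f (d t) t)
    (hg : ∀ t ∈ Set.Icc a b, HasDerivAt g (d t) t)
    (h0 : f a = g a) : ∀ t ∈ Set.Icc a b, f t = g t :=
  eq_of_has_deriv_right_eq
    (fun t ht => (hf t (Set.mem_Icc_of_Ico ht)).hasDerivWithinAt)
    (fun t ht => (hg t (Set.mem_Icc_of_Ico ht)).hasDerivWithinAt)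
    (fun t ht => (hf t ht).continuousAt.continuousWithinAt)
    (fun t ht => (hg t ht).continuousAt.continuousWithinAt) h0

/-- forward-in-time sign argument. Immediately after the state
leaves the constraint boundary `x k = σ M` (with all lower states vanishing), a
constant control `u` keeping `|x k| ≤ M` must satisfy `σ u ≤ 0`. -/
theorem sign_of_control_after_leaving_boundary
    (n k : ℕ) (hn : 1 ≤ n) (hk1 : 1 ≤ k) (hkn : k ≤ n)
    (M : ℝ) (hM : 0 < M) (σ : ℝ) (hσ : σ = -1 ∨ σ = 1)
    (δ : ℝ) (hδ : 0 < δ) (u T : ℝ) (x : ℕ → ℝ → ℝ)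
    (hx1 : ∀ t ∈ Set.Icc T (T + δ), HasDerivAt (x 1) u t)
    (hxk : ∀ j, 1 ≤ j → j < n → ∀ t ∈ Set.Icc T (T + δ), HasDerivAt (x (j + 1)) (x j t) t)
    (hzero : ∀ i, 1 ≤ i → i < k → x i T = 0)
    (hstart : x k T = σ * M)
    (hbound : ∀ t ∈ Set.Icc T (T + δ), |x k t| ≤ M) :
    σ * u ≤ 0 := by
  -- explicit solution: x j t = cⱼ + u (t-T)^j / j!
  have key : ∀ j, 1 ≤ j → j ≤ k → ∀ t ∈ Set.Icc T (T + δ),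
      x j t = (if j = k then σ * M else 0) + u * (t - T) ^ j / (j.factorial : ℝ) := by
    intro j hj
    induction j, hj using Nat.le_induction with
    | base =>
      intro h1k t ht
      set c : ℝ := if 1 = k then σ * M else 0 with hc
      have hgd : ∀ s ∈ Set.Icc T (T + δ),
          HasDerivAt (fun s => c + u * (s - T) ^ 1 / (Nat.factorial 1 : ℝ)) u s := by
        intro s _
        have : HasDerivAt (fun s => c + u * (s - T) ^ 1 / (Nat.factorial 1 : ℝ))
            (u * ((1 : ℕ) * (s - T) ^ 0 * 1) / (Nat.factorial 1 : ℝ)) s := by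
          exact ((((hasDerivAt_id s).sub_const T).pow 1).const_mul u).div_const _ |>.const_add c
        simpa using this
      have h0 : x 1 T = c + u * (T - T) ^ 1 / (Nat.factorial 1 : ℝ) := by
        rcases eq_or_lt_of_le h1k with h | h
        · simp [hc, ← h, h ▸ hstart]
        · simp [hc, Nat.ne_of_lt h, hzero 1 le_rfl h]
      exact eqOn_Icc_of_hasDerivAt hx1 hgd h0 t ht
    | succ j hj ih =>
      intro hjk t ht
      have hjk' : j < k := Nat.lt_of_succ_le hjk
      have hjn : j < n := lt_of_lt_of_le hjk' hkn
      have ihx : ∀ s ∈ Set.Icc T (T + δ),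
          x j s = u * (s - T) ^ j / (j.factorial : ℝ) := by
        intro s hs
        have := ih (le_of_lt hjk') s hs
        simpa [Nat.ne_of_lt hjk'] using this
      set c : ℝ := if j + 1 = k then σ * M else 0 with hc
      have hgd : ∀ s ∈ Set.Icc T (T + δ),
          HasDerivAt (fun s => c + u * (s - T) ^ (j + 1) / (Nat.factorial (j + 1) : ℝ))
            (x j s) s := by
        intro s hs
        have h1 : HasDerivAt (fun s => c + u * (s - T) ^ (j + 1) / (Nat.factorial (j + 1) : ℝ))
            (u * ((j + 1 : ℕ) * (s - T) ^ j * 1) / (Nat.factorial (j + 1) : ℝ)) s :=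
          ((((hasDerivAt_id s).sub_const T).pow (j + 1)).const_mul u).div_const _ |>.const_add c
        have heq : u * ((j + 1 : ℕ) * (s - T) ^ j * 1) / (Nat.factorial (j + 1) : ℝ)
            = u * (s - T) ^ j / (j.factorial : ℝ) := by
          have hf : (Nat.factorial (j + 1) : ℝ) = (j + 1 : ℕ) * (j.factorial : ℝ) := by
            push_cast [Nat.factorial_succ]; ring
          have h1 : ((j : ℝ) + 1) ≠ 0 := by positivity
          have h2 : (j.factorial : ℝ) ≠ 0 := Nat.cast_ne_zero.mpr j.factorial_ne_zero
          field_simp [hf]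
          rw [hf]
          ring
        rw [ihx s hs, ← heq]
        exact h1
      have h0 : x (j + 1) T = c + u * (T - T) ^ (j + 1) / (Nat.factorial (j + 1) : ℝ) := by
        rcases eq_or_lt_of_le hjk with h | h
        · simp [hc, ← h, h ▸ hstart]
        · simp [hc, Nat.ne_of_lt h, hzero (j + 1) (by omega) h]
      exact eqOn_Icc_of_hasDerivAt (hxk j hj hjn) hgd h0 t ht
  have hmem : T + δ ∈ Set.Icc T (T + δ) := by constructor <;> linarith
  have hval : x k (T + δ) = σ * M + u * δ ^ k / (k.factorial : ℝ) := by
    have := key k hk1 le_rfl (T + δ) hmem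
    simpa using this
  have hb := hbound (T + δ) hmem
  rw [hval] at hb
  have hσ1 : |σ| = 1 := by rcases hσ with h | h <;> simp [h]
  have hσσ : σ * σ = 1 := by rcases hσ with h | h <;> simp [h] <;> ring
  have hle : σ * (σ * M + u * δ ^ k / (k.factorial : ℝ)) ≤ M := by
    calc σ * (σ * M + u * δ ^ k / (k.factorial : ℝ))
        ≤ |σ * (σ * M + u * δ ^ k / (k.factorial : ℝ))| := le_abs_self _
      _ = |σ * M + u * δ ^ k / (k.factorial : ℝ)| := by rw [abs_mul, hσ1, one_mul]
      _ ≤ M := hb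
  have hexp : σ * (σ * M + u * δ ^ k / (k.factorial : ℝ))
      = σ * σ * M + σ * u * δ ^ k / (k.factorial : ℝ) := by ring
  rw [hexp, hσσ, one_mul] at hle
  have h2 : σ * u * δ ^ k / (k.factorial : ℝ) ≤ 0 := by linarith
  have hpos : (0:ℝ) < δ ^ k / (k.factorial : ℝ) := by positivity
  by_contra hcon
  push_neg at hcon
  have hre : σ * u * δ ^ k / (k.factorial : ℝ)
      = (σ * u) * (δ ^ k / (k.factorial : ℝ)) := by ring
  nlinarith [mul_pos hcon hpos]
end

section
/- Let n ≥ 1, 1 ≤ k ≤ n, M > 0, σ ∈ {−1, 1}, δ > 0, and let u ∈ ℝ be a constant. Let x_1, …, x_n : [T − δ, T] → ℝ satisfy the chain-of-integrators dynamics with constant control u on [T − δ, T]. Suppose x_i(T) = 0 for all 1 ≤ i < k, x_k(T) = σM, and |x_k(t)| ≤ M for all t ∈ [T − δ, T]. Then (−1)^k σ u ≤ 0. -/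
/-- Two functions with the same derivative on an interval agree up to constant;
expressed via the right endpoint. -/
lemma diff_const_on_Icc {f P g : ℝ → ℝ} {a b : ℝ}
    (hf : ∀ t ∈ Set.Icc a b, HasDerivAt f (g t) t)
    (hP : ∀ t : ℝ, HasDerivAt P (g t) t) :
    ∀ t ∈ Set.Icc a b, f t - P t = f b - P b := by
  rcases le_or_gt a b with hab | hab
  · have key : ∀ t ∈ Set.Icc a b, (fun s => f s - P s) t = (fun s => f s - P s) a := by
      apply constant_of_has_deriv_right_zero
      · have : ContinuousOn f (Set.Icc a b) := fun t ht =>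
          ((hf t ht).continuousAt).continuousWithinAt
        exact this.sub (fun t ht => ((hP t).continuousAt).continuousWithinAt)
      · intro t ht
        have h1 : HasDerivAt (fun s => f s - P s) (g t - g t) t :=
          (hf t (Set.mem_Icc_of_Ico ht)).sub (hP t)
        simpa using h1.hasDerivWithinAt
    intro t ht
    have h1 := key t ht
    have h2 := key b (Set.right_mem_Icc.mpr hab)
    simp only at h1 h2
    rw [h1, h2]
  · intro t ht
    exact absurd (ht.1.trans ht.2) (not_le.mpr hab)

/-- backward-in-time sign argument. Immediately before the state
reaches the constraint boundary `x k = σ M` (with all lower states vanishing at the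
arrival time), a constant control `u` keeping `|x k| ≤ M` must satisfy
`(-1)^k σ u ≤ 0`. -/
theorem sign_of_control_before_reaching_boundary
    (n k : ℕ) (hn : 1 ≤ n) (hk1 : 1 ≤ k) (hkn : k ≤ n)
    (M : ℝ) (hM : 0 < M) (σ : ℝ) (hσ : σ = -1 ∨ σ = 1)
    (δ : ℝ) (hδ : 0 < δ) (u T : ℝ) (x : ℕ → ℝ → ℝ)
    (hx1 : ∀ t ∈ Set.Icc (T - δ) T, HasDerivAt (x 1) u t)
    (hxk : ∀ j, 1 ≤ j → j < n → ∀ t ∈ Set.Icc (T - δ) T, HasDerivAt (x (j + 1)) (x j t) t)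
    (hzero : ∀ i, 1 ≤ i → i < k → x i T = 0)
    (hend : x k T = σ * M)
    (hbound : ∀ t ∈ Set.Icc (T - δ) T, |x k t| ≤ M) :
    (-1 : ℝ) ^ k * σ * u ≤ 0 := by
  -- explicit formula for the states
  have key : ∀ j, 1 ≤ j → j ≤ k →
      ∀ t ∈ Set.Icc (T - δ) T, x j t = x j T + u * (t - T) ^ j / (j.factorial : ℝ) := by
    intro j
    induction j with
    | zero => intro h; omega
    | succ j ih =>
      intro _ hjk t ht
      rcases Nat.eq_zero_or_pos j with hj0 | hj1
      · subst hj0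
        -- base case j+1 = 1
        have hP : ∀ s : ℝ, HasDerivAt (fun s => x 1 T + u * (s - T) ^ 1 / (1:ℝ)) u s := by
          intro s
          have h1 : HasDerivAt (fun s : ℝ => s - T) 1 s := (hasDerivAt_id s).sub_const T
          have := (((h1.pow 1).const_mul u).div_const (1:ℝ)).const_add (x 1 T)
          simpa using this
        have heq := diff_const_on_Icc (g := fun _ => u) hx1 hP t ht
        norm_num at heq ⊢
        linarith [heq]
      · -- inductive step
        have hjlt : j < k := by omega
        have hjn : j < n := lt_of_lt_of_le hjlt hkn
        have hxjT : x j T = 0 := hzero j hj1 hjlt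
        have hxj : ∀ s ∈ Set.Icc (T - δ) T, x j s = u * (s - T) ^ j / (j.factorial : ℝ) := by
          intro s hs
          have := ih hj1 (le_of_lt hjlt) s hs
          rw [hxjT] at this; simpa using this
        have hderiv : ∀ s ∈ Set.Icc (T - δ) T,
            HasDerivAt (x (j + 1)) (u * (s - T) ^ j / (j.factorial : ℝ)) s := by
          intro s hs
          have := hxk j hj1 hjn s hs
          rwa [hxj s hs] at this
        have hP : ∀ s : ℝ, HasDerivAt
            (fun s => x (j+1) T + u * (s - T) ^ (j+1) / ((j+1).factorial : ℝ))
            (u * (s - T) ^ j / (j.factorial : ℝ)) s := by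
          intro s
          have h1 : HasDerivAt (fun s : ℝ => s - T) 1 s := (hasDerivAt_id s).sub_const T
          have h2 := (((h1.pow (j+1)).const_mul u).div_const ((j+1).factorial : ℝ)).const_add
            (x (j+1) T)
          convert h2 using 1
          · rfl
          · rfl
          · rfl
          have hfac : ((j+1).factorial : ℝ) = (j+1) * (j.factorial : ℝ) := by
            rw [Nat.factorial_succ]; push_cast; ring
          have hfj : (j.factorial : ℝ) ≠ 0 := Nat.cast_ne_zero.mpr j.factorial_ne_zero
          have hfj1 : ((j+1).factorial : ℝ) ≠ 0 := Nat.cast_ne_zero.mpr (j+1).factorial_ne_zero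
          have hj1' : ((j:ℝ)+1) ≠ 0 := by positivity
          rw [hfac, Nat.add_sub_cancel]; push_cast
          field_simp
        have heq := diff_const_on_Icc (g := fun s => u * (s - T) ^ j / (j.factorial : ℝ))
          hderiv hP t ht
        simp only [sub_self, zero_pow (Nat.succ_ne_zero j), mul_zero, zero_div,
          add_zero] at heq
        linarith [heq]
  -- evaluate at t = T - δ
  have hmem : T - δ ∈ Set.Icc (T - δ) T := by constructor <;> linarith
  have hval := key k hk1 le_rfl (T - δ) hmem
  rw [hend] at hval
  have hb := hbound (T - δ) hmem
  rw [hval] at hb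
  have hσabs : |σ| = 1 := by rcases hσ with h | h <;> simp [h]
  have hσle : σ * (σ * M + u * (T - δ - T) ^ k / (k.factorial : ℝ)) ≤ M := by
    calc σ * (σ * M + u * (T - δ - T) ^ k / (k.factorial : ℝ))
        ≤ |σ * (σ * M + u * (T - δ - T) ^ k / (k.factorial : ℝ))| := le_abs_self _
      _ = |σ * M + u * (T - δ - T) ^ k / (k.factorial : ℝ)| := by rw [abs_mul, hσabs, one_mul]
      _ ≤ M := hb
  have hσ2 : σ * σ = 1 := by rcases hσ with h | h <;> simp [h] <;> ring
  have hneg : (T - δ - T : ℝ) ^ k = (-1 : ℝ) ^ k * δ ^ k := by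
    have : (T - δ - T : ℝ) = -δ := by ring
    rw [this, neg_pow]
  rw [hneg] at hσle
  have hfk : (0:ℝ) < (k.factorial : ℝ) := by positivity
  have hδk : (0:ℝ) < δ ^ k := pow_pos hδ k
  have hexp : σ * (σ * M + u * ((-1:ℝ) ^ k * δ ^ k) / (k.factorial : ℝ))
      = (σ * σ) * M + σ * u * ((-1:ℝ) ^ k * δ ^ k) / (k.factorial : ℝ) := by ring
  rw [hexp, hσ2, one_mul] at hσle
  have h4 : σ * u * ((-1:ℝ) ^ k * δ ^ k) / (k.factorial : ℝ) ≤ 0 := by linarith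
  have h5 : (-1:ℝ) ^ k * σ * u * (δ ^ k / (k.factorial : ℝ)) ≤ 0 := by
    have : (-1:ℝ) ^ k * σ * u * (δ ^ k / (k.factorial : ℝ))
        = σ * u * ((-1:ℝ) ^ k * δ ^ k) / (k.factorial : ℝ) := by ring
    rw [this]; exact h4
  have hpos : (0:ℝ) < δ ^ k / (k.factorial : ℝ) := div_pos hδk hfk
  by_contra hcon
  push_neg at hcon
  exact absurd h5 (not_le.mpr (mul_pos hcon hpos))
end
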